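/- arXiv:2401.08869 — 2 statements merged into one kernel-verified Lean document; each statement's English description precedes it below -/
import Mathlib

section
/- The subgroup ⟨X, q⟩_{M(G)} of the Miller Machine M(G) is invariant under conjugation by ⟨Θ⟩_{M(G)}: for every g ∈ ⟨X, q⟩_{M(G)} and every τ₀ ∈ ⟨Θ⟩_{M(G)}, the element τ₀ g τ₀⁻¹ lies in ⟨X, q⟩_{M(G)}. -/
/-!
Common setup: a finitely presented group `G = ⟨X ∣ R⟩` (`X` a finite set, `R` a finite
nonempty set of words of the free group `F(X)`) and its Miller machine `M(G)`,
the group generated by `X ∪ Θ ∪ {q}`, where `Θ = {θ_α : α ∈ X ∪ R}`, subject to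
the relations `θ_α x = x θ_α` (`x ∈ X`, `α ∈ X ∪ R`), `θ_x x q = q x θ_x` (`x ∈ X`)
and `θ_r q = q r θ_r` (`r ∈ R`).
-/

namespace Miller

noncomputable section

/-- Index type for the letters `Θ`: one letter `θ_α` for each `α ∈ X ∪ R`
(since `X ∩ R = ∅`, the disjoint sum is faithful). -/
abbrev ThIdx (X : Type) (R : Finset (FreeGroup X)) : Type := X ⊕ {r : FreeGroup X // r ∈ R}

/-- The generators of the Miller machine: the letters of `X`, the letters `Θ`, and `q`. -/
abbrev Gen (X : Type) (R : Finset (FreeGroup X)) : Type := X ⊕ (ThIdx X R ⊕ Unit)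

variable (X : Type) (R : Finset (FreeGroup X))

/-- The letter `x ∈ X`, as a word on the generators of `M(G)`. -/
def xg (x : X) : FreeGroup (Gen X R) := FreeGroup.of (Sum.inl x)

/-- The letter `θ_α`, as a word on the generators of `M(G)`. -/
def θg (a : ThIdx X R) : FreeGroup (Gen X R) := FreeGroup.of (Sum.inr (Sum.inl a))

/-- The letter `q`, as a word on the generators of `M(G)`. -/
def qg : FreeGroup (Gen X R) := FreeGroup.of (Sum.inr (Sum.inr ()))

/-- A word on `X` is in particular a word on the generators of `M(G)`. -/
def ofX : FreeGroup X →* FreeGroup (Gen X R) := FreeGroup.map Sum.inl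

/-- The defining relators of the Miller machine `M(G)`. -/
def rels : Set (FreeGroup (Gen X R)) :=
  {w | (∃ (a : ThIdx X R) (x : X),
          w = θg X R a * xg X R x * (xg X R x * θg X R a)⁻¹) ∨
       (∃ x : X,
          w = θg X R (Sum.inl x) * xg X R x * qg X R *
              (qg X R * xg X R x * θg X R (Sum.inl x))⁻¹) ∨
       (∃ r : {r : FreeGroup X // r ∈ R},
          w = θg X R (Sum.inr r) * qg X R *
              (qg X R * ofX X R r.1 * θg X R (Sum.inr r))⁻¹)}

/-- The group `G = ⟨X ∣ R⟩`. -/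
abbrev G := PresentedGroup (R : Set (FreeGroup X))

/-- The Miller machine `M(G)`. -/
abbrev M := PresentedGroup (rels X R)

/-- The element of `G` represented by a word on `X`. -/
def toG : FreeGroup X →* G X R := PresentedGroup.mk _

/-- The element of `M(G)` represented by a word on the generators. -/
def toM : FreeGroup (Gen X R) →* M X R := PresentedGroup.mk _

/-- The element of `M(G)` represented by a word on `X`. -/
def embX : FreeGroup X →* M X R := (toM X R).comp (ofX X R)

/-- The element of `M(G)` represented by a word on `Θ`. -/
def embTh : FreeGroup (ThIdx X R) →* M X R :=
  (toM X R).comp (FreeGroup.map fun a => Sum.inr (Sum.inl a))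

/-- The generator `x ∈ X` as element of `M(G)`. -/
def xM (x : X) : M X R := toM X R (xg X R x)

/-- The generator `θ_α` as element of `M(G)`. -/
def θM (a : ThIdx X R) : M X R := toM X R (θg X R a)

/-- The generator `q` as element of `M(G)`. -/
def qM : M X R := toM X R (qg X R)

/-- The subgroup `⟨X, q⟩` of `M(G)`. -/
def XqSub : Subgroup (M X R) := Subgroup.closure (Set.range (xM X R) ∪ {qM X R})

/-- The subgroup `⟨Θ⟩` of `M(G)`. -/
def ThSub : Subgroup (M X R) := Subgroup.closure (Set.range (θM X R))

/-- The subgroup `H = ⟨X ∪ Θ⟩` of `M(G)`. -/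
def Hgrp : Subgroup (M X R) := Subgroup.closure (Set.range (xM X R) ∪ Set.range (θM X R))

/-- The subgroup `K₋₁ = ⟨{θ_x x : x ∈ X} ∪ {θ_r : r ∈ R}⟩` of `M(G)`. -/
def Kneg : Subgroup (M X R) := Subgroup.closure
  ((Set.range fun x : X => θM X R (Sum.inl x) * xM X R x) ∪
   (Set.range fun r : {r : FreeGroup X // r ∈ R} => θM X R (Sum.inr r)))

/-- The subgroup `K₁ = ⟨{θ_x x : x ∈ X} ∪ {θ_r r : r ∈ R}⟩` of `M(G)`. -/
def Kpos : Subgroup (M X R) := Subgroup.closure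
  ((Set.range fun x : X => θM X R (Sum.inl x) * xM X R x) ∪
   (Set.range fun r : {r : FreeGroup X // r ∈ R} => θM X R (Sum.inr r) * embX X R r.1))

/-- `‖g‖`: the (reduced) word length of an element of a free group. -/
def wlen {β : Type} (g : FreeGroup β) : ℕ :=
  sInf {n | ∃ l : List (β × Bool), FreeGroup.mk l = g ∧ l.length = n}

/-- `|g|`: word length in `M(G)` with respect to the generating set `X ∪ Θ ∪ {q}`. -/
def mlen (g : M X R) : ℕ :=
  sInf {n | ∃ w : FreeGroup (Gen X R), toM X R w = g ∧ wlen w = n}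

/-- `c(u,v)`: the minimal length of a conjugator taking `u` to `v` in `M(G)`. -/
def c (u v : M X R) : ℕ :=
  sInf {n | ∃ γ : M X R, γ * u * γ⁻¹ = v ∧ mlen X R γ = n}

/-- `c'(u,v)`: the minimal length of a conjugator in `⟨X ∪ Θ⟩` taking `u` to `v`. -/
def c' (u v : M X R) : ℕ :=
  sInf {n | ∃ γ ∈ Hgrp X R, γ * u * γ⁻¹ = v ∧ mlen X R γ = n}

/-- The product `∏_{i<m} w_i r_i w_i⁻¹`. -/
def prodConj (m : ℕ) (w r : ℕ → FreeGroup X) : FreeGroup X :=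
  ((List.range m).map fun i => w i * r i * (w i)⁻¹).prod

/-- `r_0, …, r_{m-1} ∈ R^{±1}`. -/
def IsRelSeq (m : ℕ) (r : ℕ → FreeGroup X) : Prop := ∀ i < m, r i ∈ R ∨ (r i)⁻¹ ∈ R

/-- `δ(g)`: the least `m` such that `g` is freely equal to a product of `m`
conjugates of elements of `R^{±1}`. -/
def area (g : FreeGroup X) : ℕ :=
  sInf {m | ∃ w r : ℕ → FreeGroup X, IsRelSeq X R m r ∧ g = prodConj X m w r}

/-- The Dehn function `Δ` of the presentation `⟨X ∣ R⟩`. -/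
def Dehn (n : ℕ) : ℕ :=
  sSup {d | ∃ g : FreeGroup X, wlen g ≤ n ∧ toG X R g = 1 ∧ area X R g = d}

/-- `f(w) = m + ‖w₁‖ + ‖w_m‖ + ∑_{i=1}^{m-1} ‖w_i⁻¹ w_{i+1}‖` (with `0`-based indexing). -/
def fval (m : ℕ) (w : ℕ → FreeGroup X) : ℕ :=
  m + wlen (w 0) + wlen (w (m - 1)) + ∑ i ∈ Finset.range (m - 1), wlen ((w i)⁻¹ * w (i + 1))

/-- `λ(g)`: the minimum of `f(w)` over expressions `w = ∏ w_i r_i w_i⁻¹` freely equal to `g`. -/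
def lam (g : FreeGroup X) : ℕ :=
  sInf {n | ∃ (m : ℕ) (w r : ℕ → FreeGroup X),
    1 ≤ m ∧ IsRelSeq X R m r ∧ g = prodConj X m w r ∧ fval X m w = n}

/-- `Λ(n)`: the maximum of `λ(g)` over words `g` with `g =_G 1` and `‖g‖ ≤ n`. -/
def Lam (n : ℕ) : ℕ :=
  sSup {d | ∃ g : FreeGroup X, wlen g ≤ n ∧ toG X R g = 1 ∧ lam X R g = d}

/-- `t = max({‖r‖ : r ∈ R} ∪ {2})`. -/
def t : ℕ := max (R.sup fun r => wlen r) 2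

/-- `w, ε` witness the iso-computational list conjugacy `u ∼^σ v` (indices `0,…,k-1`,
with the convention that the index after `k-1` is `0`, i.e. `σ_{k+1} = σ₁`). -/
def IsICLCWitness (k : ℕ) (σ : ℕ → ℤ) (u v : ℕ → FreeGroup X) (w ε : FreeGroup X) : Prop :=
  toG X R ε = 1 ∧ ∀ i < k,
    (σ i = 1 ∧ σ ((i + 1) % k) = 1 → w * ε * u i * w⁻¹ = v i) ∧
    (σ i = 1 ∧ σ ((i + 1) % k) = -1 → w * ε * u i * ε⁻¹ * w⁻¹ = v i) ∧
    (σ i = -1 ∧ σ ((i + 1) % k) = 1 → w * u i * w⁻¹ = v i) ∧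
    (σ i = -1 ∧ σ ((i + 1) % k) = -1 → w * u i * ε⁻¹ * w⁻¹ = v i)

/-- Iso-computational list conjugacy `u ∼^σ v`. -/
def ICLC (k : ℕ) (σ : ℕ → ℤ) (u v : ℕ → FreeGroup X) : Prop :=
  ∃ w ε : FreeGroup X, IsICLCWitness X R k σ u v w ε

/-- `c_{k,σ}(u,v)`: the least `‖w‖` over witnessing pairs `(w, ε)` for `u ∼^σ v`. -/
def cList (k : ℕ) (σ : ℕ → ℤ) (u v : ℕ → FreeGroup X) : ℕ :=
  sInf {n | ∃ w ε : FreeGroup X, IsICLCWitness X R k σ u v w ε ∧ wlen w = n}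

/-- `C_{k,σ}(n)`. -/
def CC (k : ℕ) (σ : ℕ → ℤ) (n : ℕ) : ℕ :=
  sSup {d | ∃ u v : ℕ → FreeGroup X, ICLC X R k σ u v ∧
    (∑ i ∈ Finset.range k, (wlen (u i) + wlen (v i))) ≤ n - 2 * k ∧
    cList X R k σ u v = d}

/-- The alphabet `X ∪ {q}`. -/
abbrev Yt (X : Type) : Type := X ⊕ Unit

/-- The letter `q` in the free group `F(X ∪ {q})`. -/
def qY : FreeGroup (Yt X) := FreeGroup.of (Sum.inr ())

/-- A word on `X` as a word on `X ∪ {q}`. -/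
def embY : FreeGroup X →* FreeGroup (Yt X) := FreeGroup.map Sum.inl

/-- The element of `M(G)` represented by a word on `X ∪ {q}`. -/
def toMY : FreeGroup (Yt X) →* M X R :=
  (toM X R).comp (FreeGroup.map (Sum.elim Sum.inl fun u => Sum.inr (Sum.inr u)))

/-- The word `q^{σ₁}u₁q^{σ₂}u₂⋯q^{σ_k}u_k` on `X ∪ {q}` (`0`-based indexing). -/
def qword (k : ℕ) (σ : ℕ → ℤ) (u : ℕ → FreeGroup X) : FreeGroup (Yt X) :=
  ((List.range k).map fun i => qY X ^ σ i * embY X (u i)).prod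

/-- The word `q^{σ₁}u₁q^{σ₂}u₂⋯q^{σ_k}u_k` is (freely) reduced, expressed as:
its reduced length equals the sum of the lengths of its letters. -/
def ReducedForm (k : ℕ) (σ : ℕ → ℤ) (u : ℕ → FreeGroup X) : Prop :=
  wlen (qword X k σ u) = k + ∑ i ∈ Finset.range k, wlen (u i)

/-- The element `q^{σ₁}u₁q^{σ₂}u₂⋯q^{σ_k}u_k` of `M(G)`. -/
def qwordM (k : ℕ) (σ : ℕ → ℤ) (u : ℕ → FreeGroup X) : M X R :=
  toMY X R (qword X k σ u)

/-- `σ` is a tuple of signs `±1`. -/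
def IsSgn (k : ℕ) (σ : ℕ → ℤ) : Prop := ∀ i < k, σ i = 1 ∨ σ i = -1

/-- `D_{k,σ}(n)`: restriction of the conjugator length function of `M(G)` to conjugate
pairs `x = q^{σ₁}u₁⋯q^{σ_k}u_k`, `y = q^{σ₁}v₁⋯q^{σ_k}v_k` that are reduced words with
`∑ (‖u_i‖ + ‖v_i‖) ≤ n - 2k`. -/
def Dk (k : ℕ) (σ : ℕ → ℤ) (n : ℕ) : ℕ :=
  sSup {d | ∃ u v : ℕ → FreeGroup X,
    ReducedForm X k σ u ∧ ReducedForm X k σ v ∧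
    IsConj (qwordM X R k σ u) (qwordM X R k σ v) ∧
    (∑ i ∈ Finset.range k, (wlen (u i) + wlen (v i))) ≤ n - 2 * k ∧
    c X R (qwordM X R k σ u) (qwordM X R k σ v) = d}

/-- `D'_{k,σ}(n)`: as `D_{k,σ}(n)`, but for pairs conjugate via an element of `⟨X ∪ Θ⟩`
and with minimal conjugator length measured over conjugators in `⟨X ∪ Θ⟩`. -/
def Dk' (k : ℕ) (σ : ℕ → ℤ) (n : ℕ) : ℕ :=
  sSup {d | ∃ u v : ℕ → FreeGroup X,
    ReducedForm X k σ u ∧ ReducedForm X k σ v ∧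
    (∃ γ ∈ Hgrp X R, γ * qwordM X R k σ u * γ⁻¹ = qwordM X R k σ v) ∧
    (∑ i ∈ Finset.range k, (wlen (u i) + wlen (v i))) ≤ n - 2 * k ∧
    c' X R (qwordM X R k σ u) (qwordM X R k σ v) = d}

/-- `D₀(n)`: restriction of the conjugator length function of `M(G)` to pairs
`(qu, q)` with `u` a word on `X`, `qu` conjugate to `q`, and `‖u‖ ≤ n - 2`. -/
def D0 (n : ℕ) : ℕ :=
  sSup {d | ∃ u : FreeGroup X, wlen u ≤ n - 2 ∧
    IsConj (qM X R * embX X R u) (qM X R) ∧ c X R (qM X R * embX X R u) (qM X R) = d}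

/-- `D'₀(n)`: as `D₀(n)`, via conjugators in `⟨X ∪ Θ⟩`. -/
def D0' (n : ℕ) : ℕ :=
  sSup {d | ∃ u : FreeGroup X, wlen u ≤ n - 2 ∧
    (∃ γ ∈ Hgrp X R, γ * (qM X R * embX X R u) * γ⁻¹ = qM X R) ∧
    c' X R (qM X R * embX X R u) (qM X R) = d}

/-- The endomorphism `φ_α` of `F(X ∪ {q})`: it fixes each `x ∈ X` and sends `q` to
`α⁻¹qα` if `α ∈ X` and to `qα` if `α ∈ R`. -/
def phi (a : ThIdx X R) : FreeGroup (Yt X) →* FreeGroup (Yt X) :=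
  FreeGroup.lift fun s =>
    match s with
    | Sum.inl x => FreeGroup.of (Sum.inl x : Yt X)
    | Sum.inr _ =>
      match a with
      | Sum.inl x' => (FreeGroup.of (Sum.inl x' : Yt X))⁻¹ * qY X * FreeGroup.of (Sum.inl x')
      | Sum.inr r => qY X * embY X r.1

end

end Miller

section Aux
open Miller

variable {X : Type} {R : Finset (FreeGroup X)}

private lemma rel_one {w : FreeGroup (Gen X R)} (hw : w ∈ rels X R) : toM X R w = 1 :=
  (QuotientGroup.eq_one_iff w).mpr (Subgroup.subset_normalClosure hw)

private lemma rel1 (a : ThIdx X R) (x : X) : Commute (θM X R a) (xM X R x) := by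
  have h := rel_one (X := X) (R := R) (Or.inl ⟨a, x, rfl⟩)
  simp only [map_mul, map_inv] at h
  rw [mul_inv_eq_one] at h
  exact h

private lemma rel2 (x : X) :
    θM X R (Sum.inl x) * xM X R x * qM X R = qM X R * xM X R x * θM X R (Sum.inl x) := by
  have h := rel_one (X := X) (R := R) (Or.inr (Or.inl ⟨x, rfl⟩))
  simp only [map_mul, map_inv] at h
  rw [mul_inv_eq_one] at h
  exact h

private lemma rel3 (r : {r : FreeGroup X // r ∈ R}) :
    θM X R (Sum.inr r) * qM X R = qM X R * embX X R r.1 * θM X R (Sum.inr r) := by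
  have h := rel_one (X := X) (R := R) (Or.inr (Or.inr ⟨r, rfl⟩))
  simp only [map_mul, map_inv] at h
  rw [mul_inv_eq_one] at h
  simpa [embX, mul_assoc, θM, qM] using h

private lemma embX_of (x : X) : embX X R (FreeGroup.of x) = xM X R x := by
  simp [embX, ofX, xM, xg]

private lemma comm_embX (a : ThIdx X R) (u : FreeGroup X) :
    Commute (θM X R a) (embX X R u) := by
  induction u using FreeGroup.induction_on with
  | C1 => rw [map_one]; exact Commute.one_right _
  | of x => rw [embX_of]; exact rel1 a x
  | inv_of x ih => rw [map_inv]; exact ih.inv_right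
  | mul a b ha hb => rw [map_mul]; exact ha.mul_right hb

private lemma xM_mem (x : X) : xM X R x ∈ XqSub X R :=
  Subgroup.subset_closure (Or.inl ⟨x, rfl⟩)

private lemma qM_mem : qM X R ∈ XqSub X R :=
  Subgroup.subset_closure (Or.inr rfl)

private lemma embX_mem (u : FreeGroup X) : embX X R u ∈ XqSub X R := by
  induction u using FreeGroup.induction_on with
  | C1 => rw [map_one]; exact Subgroup.one_mem _
  | of x => rw [embX_of]; exact xM_mem x
  | inv_of x ih => rw [map_inv]; exact Subgroup.inv_mem _ ih
  | mul a b ha hb => rw [map_mul]; exact Subgroup.mul_mem _ ha hb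

/-- Conjugating `q` by `θ_x^{±1}`. -/
private lemma theta_x_q (x : X) :
    θM X R (Sum.inl x) * qM X R * (θM X R (Sum.inl x))⁻¹
      = (xM X R x)⁻¹ * qM X R * xM X R x ∧
    (θM X R (Sum.inl x))⁻¹ * qM X R * θM X R (Sum.inl x)
      = xM X R x * qM X R * (xM X R x)⁻¹ := by
  set θ := θM X R (Sum.inl x) with hθ
  set x' := xM X R x with hx'
  set q := qM X R with hq
  have hc : Commute θ x' := rel1 (Sum.inl x) x
  have e1 : x' * (θ * q) = q * x' * θ := by
    rw [← mul_assoc, ← hc.eq]; exact rel2 x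
  have k1 : θ * q * θ⁻¹ = x'⁻¹ * q * x' := by
    have h2 : θ * q = x'⁻¹ * (q * x' * θ) := by rw [← e1]; group
    rw [h2]; group
  refine ⟨k1, ?_⟩
  have e2 : θ⁻¹ * (x'⁻¹ * q * x') * θ = q := by rw [← k1]; group
  have e3 : x'⁻¹ * (θ⁻¹ * q * θ) * x' = q := by
    calc x'⁻¹ * (θ⁻¹ * q * θ) * x' = (x'⁻¹ * θ⁻¹) * q * (θ * x') := by group
      _ = (θ⁻¹ * x'⁻¹) * q * (x' * θ) := by
          rw [← hc.inv_left.inv_right.eq, hc.eq]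
      _ = θ⁻¹ * (x'⁻¹ * q * x') * θ := by group
      _ = q := e2
  calc θ⁻¹ * q * θ = x' * (x'⁻¹ * (θ⁻¹ * q * θ) * x') * x'⁻¹ := by group
    _ = x' * q * x'⁻¹ := by rw [e3]

/-- Conjugating `q` by `θ_r^{±1}`. -/
private lemma theta_r_q (r : {r : FreeGroup X // r ∈ R}) :
    θM X R (Sum.inr r) * qM X R * (θM X R (Sum.inr r))⁻¹
      = qM X R * embX X R r.1 ∧
    (θM X R (Sum.inr r))⁻¹ * qM X R * θM X R (Sum.inr r)
      = qM X R * (embX X R r.1)⁻¹ := by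
  set θ := θM X R (Sum.inr r) with hθ
  set rM := embX X R r.1 with hrM
  set q := qM X R with hq
  have hcr : Commute θ rM := comm_embX (Sum.inr r) r.1
  have k1 : θ * q * θ⁻¹ = q * rM := by rw [hθ, hq, hrM, rel3]; group
  refine ⟨k1, ?_⟩
  have e2 : θ⁻¹ * (q * rM) * θ = q := by rw [← k1]; group
  have e3 : (θ⁻¹ * q * θ) * rM = q := by
    calc (θ⁻¹ * q * θ) * rM = θ⁻¹ * q * (θ * rM) := by group
      _ = θ⁻¹ * q * (rM * θ) := by rw [hcr.eq]
      _ = θ⁻¹ * (q * rM) * θ := by group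
      _ = q := e2
  calc θ⁻¹ * q * θ = ((θ⁻¹ * q * θ) * rM) * rM⁻¹ := by group
    _ = q * rM⁻¹ := by rw [e3]

/-- Conjugation by `θ_a` and `θ_a⁻¹` preserves `XqSub`. -/
private lemma theta_conj (a : ThIdx X R) {g : M X R} (hg : g ∈ XqSub X R) :
    θM X R a * g * (θM X R a)⁻¹ ∈ XqSub X R ∧ (θM X R a)⁻¹ * g * θM X R a ∈ XqSub X R := by
  induction hg using Subgroup.closure_induction with
  | one =>
      refine ⟨?_, ?_⟩ <;>
        simp only [mul_one, mul_inv_cancel, inv_mul_cancel] <;>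
        exact Subgroup.one_mem _
  | mul u v _ _ hu hv =>
      constructor
      · have : θM X R a * (u * v) * (θM X R a)⁻¹
            = (θM X R a * u * (θM X R a)⁻¹) * (θM X R a * v * (θM X R a)⁻¹) := by group
        rw [this]; exact Subgroup.mul_mem _ hu.1 hv.1
      · have : (θM X R a)⁻¹ * (u * v) * θM X R a
            = ((θM X R a)⁻¹ * u * θM X R a) * ((θM X R a)⁻¹ * v * θM X R a) := by group
        rw [this]; exact Subgroup.mul_mem _ hu.2 hv.2
  | inv u _ hu =>
      constructor
      · have : θM X R a * u⁻¹ * (θM X R a)⁻¹ = (θM X R a * u * (θM X R a)⁻¹)⁻¹ := by group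
        rw [this]; exact Subgroup.inv_mem _ hu.1
      · have : (θM X R a)⁻¹ * u⁻¹ * θM X R a = ((θM X R a)⁻¹ * u * θM X R a)⁻¹ := by group
        rw [this]; exact Subgroup.inv_mem _ hu.2
  | mem s hs =>
      rcases hs with ⟨x, rfl⟩ | hs
      · have hc : Commute (θM X R a) (xM X R x) := rel1 a x
        have h1 : θM X R a * xM X R x * (θM X R a)⁻¹ = xM X R x := by
          rw [hc.eq]; group
        have h2 : (θM X R a)⁻¹ * xM X R x * θM X R a = xM X R x := by
          rw [mul_assoc, ← hc.eq]; group
        rw [h1, h2]; exact ⟨xM_mem x, xM_mem x⟩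
      · rw [Set.mem_singleton_iff] at hs
        subst hs
        cases a with
        | inl x =>
            rw [(theta_x_q x).1, (theta_x_q x).2]
            exact ⟨Subgroup.mul_mem _ (Subgroup.mul_mem _
                    (Subgroup.inv_mem _ (xM_mem x)) qM_mem) (xM_mem x),
                  Subgroup.mul_mem _ (Subgroup.mul_mem _ (xM_mem x) qM_mem)
                    (Subgroup.inv_mem _ (xM_mem x))⟩
        | inr r =>
            rw [(theta_r_q r).1, (theta_r_q r).2]
            exact ⟨Subgroup.mul_mem _ qM_mem (embX_mem r.1),
                  Subgroup.mul_mem _ qM_mem (Subgroup.inv_mem _ (embX_mem r.1))⟩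

end Aux

open Miller in
/-- The subgroup `⟨X, q⟩` of the Miller machine `M(G)` is invariant under
conjugation by `⟨Θ⟩`: for every `g ∈ ⟨X, q⟩` and every `τ₀ ∈ ⟨Θ⟩`, the element `τ₀ g τ₀⁻¹`
lies in `⟨X, q⟩`. -/
theorem statement9 (X : Type) [Fintype X] (R : Finset (FreeGroup X)) (hR : R.Nonempty)
    (g : M X R) (hg : g ∈ XqSub X R) (τ₀ : M X R) (hτ₀ : τ₀ ∈ ThSub X R) :
    τ₀ * g * τ₀⁻¹ ∈ XqSub X R := by
  have main : ∀ τ ∈ ThSub X R, ∀ h ∈ XqSub X R,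
      τ * h * τ⁻¹ ∈ XqSub X R ∧ τ⁻¹ * h * τ ∈ XqSub X R := by
    intro τ hτ
    induction hτ using Subgroup.closure_induction with
    | one =>
        intro h hh
        constructor <;> · simp only [one_mul, inv_one, mul_one]; exact hh
    | mem s hs =>
        rcases hs with ⟨a, rfl⟩
        intro h hh
        exact theta_conj a hh
    | mul u v _ _ ihu ihv =>
        intro h hh
        constructor
        · have : u * v * h * (u * v)⁻¹ = u * (v * h * v⁻¹) * u⁻¹ := by group
          rw [this]; exact (ihu _ ((ihv _ hh).1)).1
        · have : (u * v)⁻¹ * h * (u * v) = v⁻¹ * (u⁻¹ * h * u) * v := by group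
          rw [this]; exact (ihv _ ((ihu _ hh).2)).2
    | inv u _ ihu =>
        intro h hh
        refine ⟨?_, ?_⟩
        · have : u⁻¹ * h * u⁻¹⁻¹ = u⁻¹ * h * u := by rw [inv_inv]
          rw [this]; exact (ihu _ hh).2
        · have : u⁻¹⁻¹ * h * u⁻¹ = u * h * u⁻¹ := by rw [inv_inv]
          rw [this]; exact (ihu _ hh).1
  exact (main τ₀ hτ₀ g hg).1
end

section
/- Suppose x = u₀q^{σ₁}u₁q^{σ₂}⋯q^{σ_k}u_k and y = v₀q^{ε₁}v₁q^{ε₂}⋯q^{ε_ℓ}v_ℓ, where the u_i and v_i are words on X, σ_i, ε_i ∈ {±1}, and both words are freely and cyclically reduced. If x ≈ y in the Miller Machine M(G), then k = ℓ and σ_i = ε_i for all i = 1,…,k. -/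
namespace Miller

/-- A reduced word in a free group is cyclically reduced iff squaring doubles its
length. -/
def CyclRed {β : Type} (g : FreeGroup β) : Prop := wlen (g * g) = 2 * wlen g

end Miller

namespace Miller

open FreeGroup

section Words

variable {α : Type} [DecidableEq α] {L M : List (α × Bool)}

/-- Two adjacent letters that do not cancel. -/
def NoCan (a b : α × Bool) : Prop := ¬(a.1 = b.1 ∧ a.2 = !b.2)

theorem reduce_chain' (L : List (α × Bool)) : List.Chain' NoCan (reduce L) := by
  induction L with
  | nil => simp [FreeGroup.reduce, List.Chain']
  | cons a L ih =>
    rw [FreeGroup.reduce.cons]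
    rcases h : reduce L with _ | ⟨hd, tl⟩
    · simp [List.Chain']
    · rw [h] at ih
      by_cases hc : a.1 = hd.1 ∧ a.2 = !hd.2
      · simpa [hc, List.Chain'] using ih.tail
      · simpa [hc, List.Chain'] using List.isChain_cons_cons.2 ⟨hc, ih⟩

theorem reduce_eq_self (h : List.Chain' NoCan L) : reduce L = L := by
  induction L with
  | nil => rfl
  | cons a L ih =>
    rw [FreeGroup.reduce.cons, ih h.tail]
    rcases L with _ | ⟨hd, tl⟩
    · rfl
    · have hnc : NoCan a hd := List.isChain_cons_cons.1 h |>.1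
      simp only [NoCan] at hnc
      simp [hnc]

theorem toWord_chain' (w : FreeGroup α) : List.Chain' NoCan (toWord w) := by
  rw [← FreeGroup.reduce_toWord]; exact reduce_chain' _

theorem wlen_eq (w : FreeGroup α) : wlen w = w.toWord.length := by
  refine le_antisymm (Nat.sInf_le ⟨toWord w, mk_toWord, rfl⟩) (le_csInf ⟨_, toWord w, mk_toWord, rfl⟩ ?_)
  rintro n ⟨l, h1, rfl⟩
  have : toWord w = reduce l := by rw [← h1, toWord_mk]
  rw [this]
  exact FreeGroup.Red.length_le (FreeGroup.reduce.red)

theorem red_eq_of_length (h : FreeGroup.Red L M) (hl : L.length ≤ M.length) : L = M := by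
  rcases h.cases_head with rfl | ⟨L', hstep, hred⟩
  · rfl
  · have h1 := hstep.length
    have h2 := FreeGroup.Red.length_le hred
    omega

theorem mul_eq_mk (x y : FreeGroup α) : x * y = mk (x.toWord ++ y.toWord) := by
  rw [← FreeGroup.mul_mk, mk_toWord, mk_toWord]

theorem wlen_mul_le (x y : FreeGroup α) : wlen (x * y) ≤ wlen x + wlen y := by
  rw [wlen_eq, wlen_eq, wlen_eq, mul_eq_mk, toWord_mk]
  have := FreeGroup.Red.length_le (FreeGroup.reduce.red (L := x.toWord ++ y.toWord))
  simpa using this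

theorem wlen_one : wlen (1 : FreeGroup α) = 0 := by rw [wlen_eq, toWord_one]; rfl

theorem toWord_mul_of_chain' {x y : FreeGroup α}
    (h : List.Chain' NoCan (x.toWord ++ y.toWord)) :
    (x * y).toWord = x.toWord ++ y.toWord := by
  rw [mul_eq_mk, toWord_mk, reduce_eq_self h]

theorem toWord_mul_of_wlen {x y : FreeGroup α} (h : wlen (x * y) = wlen x + wlen y) :
    (x * y).toWord = x.toWord ++ y.toWord := by
  rw [mul_eq_mk, toWord_mk]
  symm
  refine red_eq_of_length (FreeGroup.reduce.red) ?_
  have : (reduce (x.toWord ++ y.toWord)).length = (x.toWord ++ y.toWord).length := by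
    have h2 : reduce (x.toWord ++ y.toWord) = (x * y).toWord := by
      rw [mul_eq_mk, toWord_mk]
    rw [h2]
    simp only [wlen_eq] at h
    simp [h]
  omega

end Words

end Miller
set_option linter.unusedSectionVars false

namespace Miller

open FreeGroup

section Qsk

variable {X : Type} [DecidableEq X]

/-- The signed `q`-skeleton of a word on `X ∪ {q}`. -/
def qskL (L : List (Yt X × Bool)) : List Bool :=
  (L.filter fun p => (p.1).isRight).map Prod.snd

/-- The signed `q`-skeleton of an element of `F(X ∪ {q})`. -/
def qsk (w : FreeGroup (Yt X)) : List Bool := qskL (toWord w)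

theorem qskL_append (L M : List (Yt X × Bool)) : qskL (L ++ M) = qskL L ++ qskL M := by
  simp [qskL]

theorem qskL_eq_nil {L : List (Yt X × Bool)} (h : ∀ p ∈ L, (p.1).isRight = false) :
    qskL L = [] := by
  have : L.filter (fun p => (p.1).isRight) = [] := List.filter_eq_nil_iff.2 (by simpa using h)
  simp [qskL, this]

/-- The letter `q` or its inverse, as a letter with sign. -/
def qlt (b : Bool) : Yt X × Bool := (Sum.inr (), b)

theorem qskL_cons_q (b : Bool) (L : List (Yt X × Bool)) :
    qskL (qlt b :: L) = b :: qskL L := by simp [qskL, qlt, List.filter_cons]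

theorem qskL_cons_x (x : X) (b : Bool) (L : List (Yt X × Bool)) :
    qskL ((Sum.inl x, b) :: L) = qskL L := by simp [qskL]

theorem toWord_embY (c : FreeGroup X) :
    (embY X c).toWord = c.toWord.map (fun p => (Sum.inl p.1, p.2)) := by
  have hmk : embY X c = mk (c.toWord.map (fun p => (Sum.inl p.1, p.2))) := by
    rw [embY, ← mk_toWord (x := c), FreeGroup.map.mk, mk_toWord]
  rw [hmk, toWord_mk]
  refine reduce_eq_self ?_
  unfold List.Chain'
  rw [List.isChain_map]
  refine (toWord_chain' c).imp ?_
  intro a b hab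
  simp only [NoCan] at hab ⊢
  simpa using hab

theorem wlen_embY (c : FreeGroup X) : wlen (embY X c) = wlen c := by
  rw [wlen_eq, wlen_eq, toWord_embY, List.length_map]

theorem mem_toWord_embY {c : FreeGroup X} {p : Yt X × Bool} (hp : p ∈ (embY X c).toWord) :
    (p.1).isRight = false := by
  rw [toWord_embY] at hp
  obtain ⟨a, _, rfl⟩ := List.mem_map.1 hp
  rfl

theorem qskL_toWord_embY (c : FreeGroup X) : qskL (embY X c).toWord = [] :=
  qskL_eq_nil fun _ hp => mem_toWord_embY hp

/-- retraction of `F(X ∪ {q})` onto `F(X)` killing `q`. -/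
def retY : FreeGroup (Yt X) →* FreeGroup X :=
  FreeGroup.lift (Sum.elim FreeGroup.of fun _ => 1)

theorem retY_embY (c : FreeGroup X) : retY (embY X c) = c := by
  have : (retY.comp (embY X) : FreeGroup X →* FreeGroup X) = MonoidHom.id _ := by
    refine FreeGroup.ext_hom _ _ fun a => ?_
    simp [retY, embY, FreeGroup.map.of, FreeGroup.lift_apply_of]
  simpa using DFunLike.congr_fun this c

theorem embY_eq_one_iff {c : FreeGroup X} : embY X c = 1 ↔ c = 1 := by
  constructor
  · intro h
    have := retY_embY (X := X) c
    rw [h] at this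
    simp only [_root_.map_one] at this
    exact this.symm
  · rintro rfl; exact _root_.map_one _

theorem qskL_reduce_qfree_append (L M : List (Yt X × Bool))
    (hL : ∀ p ∈ L, (p.1).isRight = false) (hM : reduce M = M) :
    qskL (reduce (L ++ M)) = qskL M := by
  induction L with
  | nil => simpa [hM]
  | cons a L ih =>
    have ha : (a.1).isRight = false := hL a (by simp)
    have ih' := ih fun p hp => hL p (by simp [hp])
    rw [List.cons_append, FreeGroup.reduce.cons]
    rcases hT : reduce (L ++ M) with _ | ⟨hd, tl⟩
    · rw [hT] at ih'
      have : qskL (X := X) [a] = [] := qskL_eq_nil (by simpa using ha)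
      simp only [List.casesOn]
      rw [this, ← ih']
      simp [qskL]
    · rw [hT] at ih'
      by_cases hc : a.1 = hd.1 ∧ a.2 = !hd.2
      · have hhd : (hd.1).isRight = false := by rw [← hc.1]; exact ha
        have h1 : qskL (hd :: tl) = qskL tl := by
          rcases hd with ⟨h1, h2⟩
          rcases h1 with x | u
          · exact qskL_cons_x x h2 tl
          · simp at hhd
        simp only [hc, and_self, if_true]
        rw [← ih', h1]
      · simp only [hc, if_false]
        rcases a with ⟨a1, a2⟩
        rcases a1 with x | u
        · rw [qskL_cons_x, ih']
        · simp at ha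

theorem qsk_mul_left (c : FreeGroup X) (w : FreeGroup (Yt X)) :
    qsk (embY X c * w) = qsk w := by
  rw [qsk, qsk, mul_eq_mk, toWord_mk]
  exact qskL_reduce_qfree_append _ _ (fun p hp => mem_toWord_embY hp) (reduce_toWord w)

theorem invRev_cons (a : Yt X × Bool) (L : List (Yt X × Bool)) :
    invRev (a :: L) = invRev L ++ [(a.1, !a.2)] := by
  simp [invRev]

theorem qskL_invRev (L : List (Yt X × Bool)) :
    qskL (invRev L) = ((qskL L).map (fun b => !b)).reverse := by
  induction L with
  | nil => rfl
  | cons a L ih =>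
    rcases a with ⟨a1, a2⟩
    rw [invRev_cons, qskL_append, ih]
    rcases a1 with x | u
    · have h0 : qskL (X := X) [(Sum.inl x, !a2)] = [] := by simp [qskL]
      have h1 : qskL ((Sum.inl x, a2) :: L) = qskL L := by simp [qskL]
      rw [h0, h1]
      simp
    · have h0 : qskL (X := X) [((Sum.inr u : Yt X), !a2)] = [!a2] := by simp [qskL]
      have h1 : qskL (((Sum.inr u : Yt X), a2) :: L) = a2 :: qskL L := by simp [qskL, List.filter_cons]
      rw [h0, h1]
      simp

theorem qsk_inv (w : FreeGroup (Yt X)) :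
    qsk w⁻¹ = ((qsk w).map (fun b => !b)).reverse := by
  rw [qsk, qsk, toWord_inv, qskL_invRev]

theorem qsk_mul_right (c : FreeGroup X) (w : FreeGroup (Yt X)) :
    qsk (w * embY X c) = qsk w := by
  have h1 : qsk ((w * embY X c)⁻¹) = qsk (w⁻¹) := by
    rw [mul_inv_rev, ← _root_.map_inv]
    exact qsk_mul_left _ _
  rw [qsk_inv, qsk_inv] at h1
  have hrev := List.reverse_injective h1
  have hinj : Function.Injective (fun b : Bool => !b) := fun a b h => by
    simpa [Bool.not_not] using congrArg (fun c => !c) h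
  exact List.map_injective_iff.2 hinj hrev

end Qsk

end Miller
set_option linter.unusedSectionVars false

namespace Miller

open FreeGroup

section Blocks

variable {X : Type} [DecidableEq X]

/-- `q` or `q⁻¹` according to a sign bit. -/
def qpow (b : Bool) : FreeGroup (Yt X) := cond b (qY X) (qY X)⁻¹

theorem toWord_qpow (b : Bool) : (qpow (X := X) b).toWord = [qlt b] := by
  cases b
  · show (qY X)⁻¹.toWord = _
    rw [qY, toWord_inv, toWord_of]
    rfl
  · exact toWord_of _

theorem qpow_eq_mk (b : Bool) : qpow (X := X) b = mk [qlt b] := by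
  rw [← toWord_qpow b, mk_toWord]

theorem wlen_qpow (b : Bool) : wlen (qpow (X := X) b) = 1 := by
  rw [wlen_eq, toWord_qpow]; rfl

theorem noCan_x_q (x : X) (b b' : Bool) : NoCan ((Sum.inl x : Yt X), b) (qlt b') := by
  simp [NoCan, qlt]

theorem noCan_q_x (x : X) (b b' : Bool) : NoCan (qlt b) ((Sum.inl x : Yt X), b') := by
  simp [NoCan, qlt]

theorem noCan_left_embY {c : FreeGroup X} {p : Yt X × Bool} (hp : p ∈ (embY X c).toWord)
    (b : Bool) : NoCan p (qlt b) := by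
  rw [toWord_embY] at hp
  obtain ⟨a, _, rfl⟩ := List.mem_map.1 hp
  exact noCan_x_q _ _ _

theorem noCan_right_embY {c : FreeGroup X} {p : Yt X × Bool} (hp : p ∈ (embY X c).toWord)
    (b : Bool) : NoCan (qlt b) p := by
  rw [toWord_embY] at hp
  obtain ⟨a, _, rfl⟩ := List.mem_map.1 hp
  exact noCan_q_x _ _ _

/-- The product `∏ (a i) q^{e i} (b i)`. -/
def blocks (k : ℕ) (e : ℕ → Bool) (a b : ℕ → FreeGroup X) : FreeGroup (Yt X) :=
  ((List.range k).map fun i => embY X (a i) * qpow (e i) * embY X (b i)).prod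

theorem blocks_zero (e : ℕ → Bool) (a b : ℕ → FreeGroup X) : blocks 0 e a b = 1 := rfl

theorem blocks_succ (k : ℕ) (e : ℕ → Bool) (a b : ℕ → FreeGroup X) :
    blocks (k + 1) e a b =
      (embY X (a 0) * qpow (e 0) * embY X (b 0)) *
        blocks k (fun i => e (i + 1)) (fun i => a (i + 1)) (fun i => b (i + 1)) := by
  rw [blocks, List.range_succ_eq_map, List.map_cons, List.prod_cons, List.map_map]
  rfl

/-- Key structural lemma: in a product of blocks with no `q`-cancellation possible,
the `q`-skeleton is the sign sequence, and the reduced word starts as expected. -/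
theorem blocks_main : ∀ (k : ℕ) (e : ℕ → Bool) (a b : ℕ → FreeGroup X),
    (∀ i, i + 1 < k → e i ≠ e (i + 1) → b i * a (i + 1) ≠ 1) →
    qsk (blocks k e a b) = (List.range k).map e ∧
      (0 < k → ∃ L, (blocks k e a b).toWord = (embY X (a 0)).toWord ++ qlt (e 0) :: L) := by
  intro k
  induction k with
  | zero =>
    intro e a b _
    constructor
    · simp [blocks_zero, qsk, toWord_one, qskL]
    · omega
  | succ k ih =>
    intro e a b hcond
    set e' : ℕ → Bool := fun i => e (i + 1) with he'
    set a' : ℕ → FreeGroup X := fun i => a (i + 1) with ha'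
    set b' : ℕ → FreeGroup X := fun i => b (i + 1) with hb'
    have hcond' : ∀ i, i + 1 < k → e' i ≠ e' (i + 1) → b' i * a' (i + 1) ≠ 1 := by
      intro i hi hne
      exact hcond (i + 1) (by omega) hne
    obtain ⟨ihq, ihh⟩ := ih e' a' b' hcond'
    set W' := blocks k e' a' b' with hW'
    set y := embY X (b 0) * W' with hy
    -- establish: Chain' NoCan (qlt (e 0) :: y.toWord), plus toWord y description
    have hqy : List.Chain' NoCan (qlt (e 0) :: y.toWord) := by
      rcases Nat.eq_zero_or_pos k with hk | hk
      · -- k = 0 : y = embY (b 0)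
        subst hk
        have : y = embY X (b 0) := by rw [hy, hW', blocks_zero, mul_one]
        rw [this]
        refine List.isChain_cons.2 ⟨?_, toWord_chain' _⟩
        intro p hp
        exact noCan_right_embY (List.mem_of_mem_head? hp) _
      · obtain ⟨L', hL'⟩ := ihh hk
        have hchainW' : List.Chain' NoCan ((embY X (a' 0)).toWord ++ qlt (e' 0) :: L') := by
          rw [← hL']; exact toWord_chain' _
        have hchain2 : List.Chain' NoCan (qlt (e' 0) :: L') :=
          (List.isChain_append.1 hchainW').2.1
        have hz : (mk (qlt (e' 0) :: L') : FreeGroup (Yt X)).toWord = qlt (e' 0) :: L' := by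
          rw [toWord_mk, reduce_eq_self hchain2]
        have hWsplit : W' = embY X (a' 0) * mk (qlt (e' 0) :: L') := by
          rw [← mk_toWord (x := W'), hL', ← FreeGroup.mul_mk, mk_toWord]
        have hymul : y = embY X (b 0 * a' 0) * mk (qlt (e' 0) :: L') := by
          rw [hy, hWsplit, _root_.map_mul, mul_assoc]
        by_cases hba : b 0 * a' 0 = 1
        · -- y = mk (qlt (e' 0) :: L'), and e 0 = e' 0
          have hyz : y = mk (qlt (e' 0) :: L') := by
            rw [hymul, hba, _root_.map_one, one_mul]
          have he01 : e 0 = e' 0 := by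
            by_contra hne
            exact hcond 0 (by omega) hne hba
          rw [hyz, hz]
          refine List.isChain_cons.2 ⟨?_, hchain2⟩
          intro p hp
          simp only [List.head?_cons, Option.mem_def, Option.some.injEq] at hp
          subst hp
          simp [NoCan, qlt, he01]
        · -- y has a nonempty X-prefix
          have hnonnil : (embY X (b 0 * a' 0)).toWord ≠ [] := by
            intro hnil
            exact hba (embY_eq_one_iff.1 (by rw [← mk_toWord (x := embY X (b 0 * a' 0)), hnil]; rfl))
          have hychain : List.Chain' NoCan ((embY X (b 0 * a' 0)).toWord ++ qlt (e' 0) :: L') := by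
            refine List.isChain_append.2 ⟨toWord_chain' _, hchain2, ?_⟩
            intro p hp p' hp'
            have hpm : p ∈ (embY X (b 0 * a' 0)).toWord := List.mem_of_mem_getLast? hp
            simp only [List.head?_cons, Option.mem_def, Option.some.injEq] at hp'
            subst hp'
            exact noCan_left_embY hpm _
          have hyto : y.toWord = (embY X (b 0 * a' 0)).toWord ++ qlt (e' 0) :: L' := by
            rw [hymul, toWord_mul_of_chain' (by rw [hz]; exact hychain), hz]
          rw [hyto]
          refine List.isChain_cons.2 ⟨?_, hychain⟩
          intro p hp
          rcases hL : (embY X (b 0 * a' 0)).toWord with _ | ⟨c, Lc⟩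
          · exact absurd hL hnonnil
          · rw [hL] at hp
            simp only [List.cons_append, List.head?_cons, Option.mem_def, Option.some.injEq] at hp
            subst hp
            exact noCan_right_embY (by rw [hL]; simp) _
    -- toWord (qpow (e 0) * y) = qlt (e 0) :: y.toWord
    have hqyto : (qpow (e 0) * y).toWord = qlt (e 0) :: y.toWord := by
      have : qpow (X := X) (e 0) * y = mk (qlt (e 0) :: y.toWord) := by
        rw [qpow_eq_mk, ← mk_toWord (x := y), FreeGroup.mul_mk, mk_toWord]
        rfl
      rw [this, toWord_mk, reduce_eq_self hqy]
    have hblocks : blocks (k + 1) e a b = embY X (a 0) * (qpow (e 0) * y) := by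
      rw [blocks_succ, hy, ← he', ← ha', ← hb', ← hW']
      group
    have hchainT : List.Chain' NoCan ((embY X (a 0)).toWord ++ qlt (e 0) :: y.toWord) := by
      refine List.isChain_append.2 ⟨toWord_chain' _, hqy, ?_⟩
      intro p hp p' hp'
      have hpm : p ∈ (embY X (a 0)).toWord := List.mem_of_mem_getLast? hp
      simp only [List.head?_cons, Option.mem_def, Option.some.injEq] at hp'
      subst hp'
      exact noCan_left_embY hpm _
    have hT : (blocks (k + 1) e a b).toWord = (embY X (a 0)).toWord ++ qlt (e 0) :: y.toWord := by
      rw [hblocks, toWord_mul_of_chain' (by rw [hqyto]; exact hchainT), hqyto]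
    constructor
    · rw [qsk, hT, qskL_append, qskL_toWord_embY, qskL_cons_q]
      have hqy2 : qskL y.toWord = (List.range k).map e' := by
        have : qskL y.toWord = qsk y := rfl
        rw [this, hy, qsk_mul_left]
        exact ihq
      rw [hqy2, List.range_succ_eq_map, List.map_cons, List.map_map]
      rfl
    · intro _
      exact ⟨y.toWord, hT⟩

end Blocks

end Miller
set_option linter.unusedSectionVars false

namespace Miller

open FreeGroup

section Qword

variable {X : Type} [DecidableEq X]

theorem qword_succ (k : ℕ) (σ : ℕ → ℤ) (u : ℕ → FreeGroup X) :
    qword X (k + 1) σ u =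
      (qY X ^ σ 0 * embY X (u 0)) *
        qword X k (fun i => σ (i + 1)) (fun i => u (i + 1)) := by
  rw [qword, List.range_succ_eq_map, List.map_cons, List.prod_cons, List.map_map]
  rfl

theorem qY_zpow_eq_qpow {n : ℤ} (h : n = 1 ∨ n = -1) :
    qY X ^ n = qpow (X := X) (decide (n = 1)) := by
  rcases h with rfl | rfl
  · simp [qpow, zpow_one]
  · norm_num [qpow, zpow_neg_one]

theorem wlen_qY_zpow {n : ℤ} (h : n = 1 ∨ n = -1) : wlen (qY X ^ n) = 1 := by
  rw [qY_zpow_eq_qpow h, wlen_qpow]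

theorem wlen_qword_le : ∀ (k : ℕ) (σ : ℕ → ℤ) (u : ℕ → FreeGroup X), IsSgn k σ →
    wlen (qword X k σ u) ≤ k + ∑ i ∈ Finset.range k, wlen (u i) := by
  intro k
  induction k with
  | zero => intro σ u _; simp [qword, wlen_one]
  | succ k ih =>
    intro σ u hσ
    rw [qword_succ]
    have h1 := wlen_mul_le (qY X ^ σ 0 * embY X (u 0))
      (qword X k (fun i => σ (i + 1)) (fun i => u (i + 1)))
    have h2 := wlen_mul_le (qY X ^ σ 0) (embY X (u 0))
    have h3 : wlen (qword X k (fun i => σ (i + 1)) (fun i => u (i + 1))) ≤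
        k + ∑ i ∈ Finset.range k, wlen (u (i + 1)) :=
      ih (fun i => σ (i + 1)) (fun i => u (i + 1)) (fun i hi => hσ (i + 1) (by omega))
    have h4 : wlen (qY X ^ σ 0) = 1 := wlen_qY_zpow (hσ 0 (by omega))
    have h5 : wlen (embY X (u 0)) = wlen (u 0) := wlen_embY _
    have h6 : ∑ i ∈ Finset.range (k + 1), wlen (u i) =
        (∑ i ∈ Finset.range k, wlen (u (i + 1))) + wlen (u 0) :=
      Finset.sum_range_succ' _ _
    omega

/-- Extraction of "no adjacent cancelling `q`-pair" from the reducedness hypothesis. -/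
theorem flips_of_reduced : ∀ (k : ℕ) (σ : ℕ → ℤ) (u : ℕ → FreeGroup X) (u₀ : FreeGroup X),
    IsSgn k σ →
    wlen (embY X u₀ * qword X k σ u) = wlen u₀ + (k + ∑ i ∈ Finset.range k, wlen (u i)) →
    ∀ i, i + 1 < k → σ i ≠ σ (i + 1) → u i ≠ 1 := by
  intro k
  induction k with
  | zero => intro σ u u₀ _ _ i hi; omega
  | succ k ih =>
    intro σ u u₀ hσ hred i hik
    have hσ' : IsSgn k (fun i => σ (i + 1)) := fun i hi => hσ (i + 1) (by omega)
    have hsum : ∑ i ∈ Finset.range (k + 1), wlen (u i) =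
        (∑ i ∈ Finset.range k, wlen (u (i + 1))) + wlen (u 0) :=
      Finset.sum_range_succ' _ _
    have hq0 : wlen (qY X ^ σ 0) = 1 := wlen_qY_zpow (hσ 0 (by omega))
    have hsplit : embY X u₀ * qword X (k + 1) σ u =
        (embY X u₀ * qY X ^ σ 0) *
          (embY X (u 0) * qword X k (fun i => σ (i + 1)) (fun i => u (i + 1))) := by
      rw [qword_succ]; group
    have hBle : wlen (embY X (u 0) * qword X k (fun i => σ (i + 1)) (fun i => u (i + 1))) ≤
        wlen (u 0) + (k + ∑ i ∈ Finset.range k, wlen (u (i + 1))) := by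
      have e1 := wlen_mul_le (embY X (u 0)) (qword X k (fun i => σ (i + 1)) (fun i => u (i + 1)))
      have e2 : wlen (qword X k (fun i => σ (i + 1)) (fun i => u (i + 1))) ≤
          k + ∑ i ∈ Finset.range k, wlen (u (i + 1)) :=
        wlen_qword_le k _ _ hσ'
      have e3 := wlen_embY (X := X) (u 0)
      omega
    have hAle : wlen (embY X u₀ * qY X ^ σ 0) ≤ wlen u₀ + 1 := by
      have e1 := wlen_mul_le (embY X u₀) (qY X ^ σ 0)
      have e2 := wlen_embY (X := X) u₀
      omega
    have hABle := wlen_mul_le (embY X u₀ * qY X ^ σ 0)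
      (embY X (u 0) * qword X k (fun i => σ (i + 1)) (fun i => u (i + 1)))
    rw [← hsplit] at hABle
    have hBred : wlen (embY X (u 0) * qword X k (fun i => σ (i + 1)) (fun i => u (i + 1))) =
        wlen (u 0) + (k + ∑ i ∈ Finset.range k, wlen (u (i + 1))) := by omega
    intro hne
    rcases i with _ | j
    · -- i = 0 : direct contradiction if u 0 = 1
      intro hu0
      obtain ⟨m, rfl⟩ : ∃ m, k = m + 1 := ⟨k - 1, by omega⟩
      have hcancel : qY X ^ σ 0 * qY X ^ σ 1 = 1 := by
        rw [← zpow_add]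
        have h0 := hσ 0 (by omega)
        have h1 := hσ 1 (by omega)
        have hne' : σ 0 ≠ σ 1 := by simpa using hne
        have : σ 0 + σ 1 = 0 := by
          rcases h0 with h0 | h0 <;> rcases h1 with h1 | h1 <;> omega
        rw [this, zpow_zero]
      have hq2 : qword X (m + 1) (fun i => σ (i + 1)) (fun i => u (i + 1)) =
          (qY X ^ σ 1 * embY X (u 1)) *
            qword X m (fun i => σ (i + 1 + 1)) (fun i => u (i + 1 + 1)) := by
        rw [qword_succ]
      have hcollapse : embY X u₀ * qword X (m + 1 + 1) σ u =
          embY X u₀ * (embY X (u 1) *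
            qword X m (fun i => σ (i + 1 + 1)) (fun i => u (i + 1 + 1))) := by
        rw [qword_succ, hq2, hu0, _root_.map_one, mul_one]
        calc embY X u₀ * (qY X ^ σ 0 * (qY X ^ σ 1 * embY X (u 1) *
              qword X m (fun i => σ (i + 1 + 1)) (fun i => u (i + 1 + 1))))
            = embY X u₀ * ((qY X ^ σ 0 * qY X ^ σ 1) * (embY X (u 1) *
              qword X m (fun i => σ (i + 1 + 1)) (fun i => u (i + 1 + 1)))) := by group
          _ = _ := by rw [hcancel, one_mul]
      have hub : wlen (embY X u₀ * qword X (m + 1 + 1) σ u) ≤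
          wlen u₀ + (wlen (u 1) + (m + ∑ i ∈ Finset.range m, wlen (u (i + 1 + 1)))) := by
        rw [hcollapse]
        have e1 := wlen_mul_le (embY X u₀)
          (embY X (u 1) * qword X m (fun i => σ (i + 1 + 1)) (fun i => u (i + 1 + 1)))
        have e2 := wlen_mul_le (embY X (u 1))
          (qword X m (fun i => σ (i + 1 + 1)) (fun i => u (i + 1 + 1)))
        have e3 : wlen (qword X m (fun i => σ (i + 1 + 1)) (fun i => u (i + 1 + 1))) ≤
            m + ∑ i ∈ Finset.range m, wlen (u (i + 1 + 1)) :=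
          wlen_qword_le m _ _ (fun i hi => hσ (i + 1 + 1) (by omega))
        have e4 := wlen_embY (X := X) u₀
        have e5 := wlen_embY (X := X) (u 1)
        omega
      have hsum2 : ∑ i ∈ Finset.range (m + 1), wlen (u (i + 1)) =
          (∑ i ∈ Finset.range m, wlen (u (i + 1 + 1))) + wlen (u (0 + 1)) :=
        Finset.sum_range_succ' (fun i => wlen (u (i + 1))) m
      have hu01 : wlen (u (0 + 1)) = wlen (u 1) := by norm_num
      have hu0len : wlen (u 0) = 0 := by rw [hu0, wlen_one]
      omega
    · -- i = j + 1 : use the induction hypothesis on the truncated word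
      exact ih (fun i => σ (i + 1)) (fun i => u (i + 1)) (u 0) hσ' hBred j (by omega) hne

theorem qword_eq_blocks (k : ℕ) (σ : ℕ → ℤ) (u : ℕ → FreeGroup X) (hσ : IsSgn k σ) :
    qword X k σ u = blocks k (fun i => decide (σ i = 1)) (fun _ => 1) u := by
  rw [qword, blocks]
  congr 1
  refine List.map_congr_left fun i hi => ?_
  rw [List.mem_range] at hi
  rw [qY_zpow_eq_qpow (hσ i hi), _root_.map_one, one_mul]

end Qword

end Miller
set_option linter.unusedSectionVars false

namespace Miller

open FreeGroup

section Algebra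

variable (X : Type) (R : Finset (FreeGroup X))

/-- The inverse of the endomorphism `φ_α`. -/
def phiInv (a : ThIdx X R) : FreeGroup (Yt X) →* FreeGroup (Yt X) :=
  FreeGroup.lift fun s =>
    match s with
    | Sum.inl x => FreeGroup.of (Sum.inl x : Yt X)
    | Sum.inr _ =>
      match a with
      | Sum.inl x' => FreeGroup.of (Sum.inl x' : Yt X) * qY X * (FreeGroup.of (Sum.inl x' : Yt X))⁻¹
      | Sum.inr r => qY X * (embY X r.1)⁻¹

variable {X R}

theorem phi_x (a : ThIdx X R) (x : X) :
    phi X R a (FreeGroup.of (Sum.inl x : Yt X)) = FreeGroup.of (Sum.inl x : Yt X) :=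
  FreeGroup.lift_apply_of

theorem phiInv_x (a : ThIdx X R) (x : X) :
    phiInv X R a (FreeGroup.of (Sum.inl x : Yt X)) = FreeGroup.of (Sum.inl x : Yt X) :=
  FreeGroup.lift_apply_of

theorem phi_embY (a : ThIdx X R) (c : FreeGroup X) : phi X R a (embY X c) = embY X c := by
  have : (phi X R a).comp (embY X) = embY X := by
    refine FreeGroup.ext_hom _ _ fun x => ?_
    simp only [MonoidHom.comp_apply, embY, FreeGroup.map.of]
    exact phi_x a x
  exact DFunLike.congr_fun this c

theorem phiInv_embY (a : ThIdx X R) (c : FreeGroup X) : phiInv X R a (embY X c) = embY X c := by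
  have : (phiInv X R a).comp (embY X) = embY X := by
    refine FreeGroup.ext_hom _ _ fun x => ?_
    simp only [MonoidHom.comp_apply, embY, FreeGroup.map.of]
    exact phiInv_x a x
  exact DFunLike.congr_fun this c

theorem phi_q_inl (x' : X) :
    phi X R (Sum.inl x') (qY X) =
      (FreeGroup.of (Sum.inl x' : Yt X))⁻¹ * qY X * FreeGroup.of (Sum.inl x' : Yt X) :=
  FreeGroup.lift_apply_of

theorem phi_q_inr (r : {r : FreeGroup X // r ∈ R}) :
    phi X R (Sum.inr r) (qY X) = qY X * embY X r.1 :=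
  FreeGroup.lift_apply_of

theorem phiInv_q_inl (x' : X) :
    phiInv X R (Sum.inl x') (qY X) =
      FreeGroup.of (Sum.inl x' : Yt X) * qY X * (FreeGroup.of (Sum.inl x' : Yt X))⁻¹ :=
  FreeGroup.lift_apply_of

theorem phiInv_q_inr (r : {r : FreeGroup X // r ∈ R}) :
    phiInv X R (Sum.inr r) (qY X) = qY X * (embY X r.1)⁻¹ :=
  FreeGroup.lift_apply_of

theorem phi_comp_phiInv (a : ThIdx X R) :
    (phi X R a).comp (phiInv X R a) = MonoidHom.id _ := by
  refine FreeGroup.ext_hom _ _ fun s => ?_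
  rcases s with x | u
  · simp only [MonoidHom.comp_apply, MonoidHom.id_apply, phiInv_x, phi_x]
  · have hq : FreeGroup.of (Sum.inr u : Yt X) = qY X := rfl
    rcases a with x' | r
    · simp only [MonoidHom.comp_apply, MonoidHom.id_apply, hq, phiInv_q_inl,
        _root_.map_mul, _root_.map_inv, phi_x, phi_q_inl]
      group
    · simp only [MonoidHom.comp_apply, MonoidHom.id_apply, hq, phiInv_q_inr,
        _root_.map_mul, _root_.map_inv, phi_embY, phi_q_inr]
      group

theorem phiInv_comp_phi (a : ThIdx X R) :
    (phiInv X R a).comp (phi X R a) = MonoidHom.id _ := by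
  refine FreeGroup.ext_hom _ _ fun s => ?_
  rcases s with x | u
  · simp only [MonoidHom.comp_apply, MonoidHom.id_apply, phiInv_x, phi_x]
  · have hq : FreeGroup.of (Sum.inr u : Yt X) = qY X := rfl
    rcases a with x' | r
    · simp only [MonoidHom.comp_apply, MonoidHom.id_apply, hq, phi_q_inl,
        _root_.map_mul, _root_.map_inv, phiInv_x, phiInv_q_inl]
      group
    · simp only [MonoidHom.comp_apply, MonoidHom.id_apply, hq, phi_q_inr,
        _root_.map_mul, _root_.map_inv, phiInv_embY, phiInv_q_inr]
      group

variable (X R) in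
/-- The automorphism `φ_α` of `F(X ∪ {q})`. -/
def phiAut (a : ThIdx X R) : MulAut (FreeGroup (Yt X)) :=
  MonoidHom.toMulEquiv (phi X R a) (phiInv X R a) (phiInv_comp_phi a) (phi_comp_phiInv a)

theorem phiAut_apply (a : ThIdx X R) (w : FreeGroup (Yt X)) : phiAut X R a w = phi X R a w := rfl

variable (X R) in
/-- The action of `F(Θ)` on `F(X ∪ {q})`. -/
def act : FreeGroup (ThIdx X R) →* MulAut (FreeGroup (Yt X)) :=
  FreeGroup.lift (phiAut X R)

theorem act_of (a : ThIdx X R) : act X R (FreeGroup.of a) = phiAut X R a := FreeGroup.lift_apply_of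

theorem act_of_apply (a : ThIdx X R) (w : FreeGroup (Yt X)) :
    act X R (FreeGroup.of a) w = phi X R a w := by rw [act_of, phiAut_apply]

theorem act_embY (θ : FreeGroup (ThIdx X R)) (c : FreeGroup X) :
    act X R θ (embY X c) = embY X c := by
  induction θ using FreeGroup.induction_on with
  | C1 => simp
  | of a =>
    show act X R (FreeGroup.of a) (embY X c) = embY X c
    rw [act_of_apply, phi_embY]
  | inv_of a ih =>
    rw [_root_.map_inv]
    show ((act X R (FreeGroup.of a))⁻¹ : MulAut (FreeGroup (Yt X))) (embY X c) = embY X c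
    rw [MulAut.inv_def]
    refine (MulEquiv.symm_apply_eq _).2 ?_
    exact ih.symm
  | mul x y ihx ihy =>
    rw [_root_.map_mul]
    show act X R x (act X R y (embY X c)) = embY X c
    rw [ihy, ihx]

theorem act_q (θ : FreeGroup (ThIdx X R)) :
    ∃ p s : FreeGroup X, act X R θ (qY X) = embY X p * qY X * embY X s := by
  induction θ using FreeGroup.induction_on with
  | C1 => exact ⟨1, 1, by simp⟩
  | of a =>
    rcases a with x' | r
    · refine ⟨(FreeGroup.of x')⁻¹, FreeGroup.of x', ?_⟩
      show act X R (FreeGroup.of (Sum.inl x')) (qY X) = _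
      rw [act_of_apply, phi_q_inl]
      simp [embY, _root_.map_inv, FreeGroup.map.of]
    · refine ⟨1, r.1, ?_⟩
      show act X R (FreeGroup.of (Sum.inr r)) (qY X) = _
      rw [act_of_apply, phi_q_inr]
      simp
  | inv_of a ih =>
    obtain ⟨p, s, hps⟩ := ih
    refine ⟨p⁻¹, s⁻¹, ?_⟩
    rw [_root_.map_inv]
    have hps' : act X R (FreeGroup.of a) (qY X) = embY X p * qY X * embY X s := hps
    have key : act X R (FreeGroup.of a) (embY X p⁻¹ * qY X * embY X s⁻¹) = qY X := by
      rw [_root_.map_mul, _root_.map_mul, act_embY, act_embY, hps']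
      simp only [_root_.map_inv]
      group
    show ((act X R (FreeGroup.of a))⁻¹ : MulAut (FreeGroup (Yt X))) (qY X) = _
    rw [MulAut.inv_def]
    exact (MulEquiv.symm_apply_eq _).2 key.symm
  | mul x y ihx ihy =>
    obtain ⟨px, sx, hx⟩ := ihx
    obtain ⟨py, sy, hy⟩ := ihy
    refine ⟨py * px, sx * sy, ?_⟩
    rw [_root_.map_mul]
    show act X R x (act X R y (qY X)) = _
    rw [hy, _root_.map_mul, _root_.map_mul, act_embY, act_embY, hx]
    simp only [_root_.map_mul]
    group

theorem act_qword [DecidableEq X] (θ : FreeGroup (ThIdx X R)) (p s : FreeGroup X)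
    (hq : act X R θ (qY X) = embY X p * qY X * embY X s)
    (k : ℕ) (σ : ℕ → ℤ) (u : ℕ → FreeGroup X) (hσ : IsSgn k σ) :
    act X R θ (qword X k σ u) =
      blocks k (fun i => decide (σ i = 1))
        (fun i => cond (decide (σ i = 1)) p s⁻¹)
        (fun i => cond (decide (σ i = 1)) (s * u i) (p⁻¹ * u i)) := by
  rw [qword, blocks, map_list_prod, List.map_map]
  congr 1
  refine List.map_congr_left fun i hi => ?_
  rw [List.mem_range] at hi
  show act X R θ (qY X ^ σ i * embY X (u i)) = _
  rcases hσ i hi with h1 | h1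
  · have he : decide (σ i = 1) = true := by simp [h1]
    rw [_root_.map_mul, act_embY, he, h1, zpow_one, hq]
    simp only [cond_true, qpow, _root_.map_mul]
    group
  · have he : decide (σ i = 1) = false := by simp [h1]
    rw [_root_.map_mul, act_embY, he, h1, zpow_neg_one, _root_.map_inv, hq]
    simp only [cond_false, qpow, _root_.map_mul, _root_.map_inv, mul_inv_rev]
    group

end Algebra

end Miller
set_option linter.unusedSectionVars false

namespace Miller

open FreeGroup SemidirectProduct

section Psi

variable (X : Type) (R : Finset (FreeGroup X))

/-- Target of the structural homomorphism: `F(X ∪ {q}) ⋊ F(Θ)`. -/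
abbrev SD := SemidirectProduct (FreeGroup (Yt X)) (FreeGroup (ThIdx X R)) (act X R)

/-- Generators of `M(G)` interpreted in `SD`. -/
def FF : Gen X R → SD X R
  | Sum.inl x => SemidirectProduct.inl (FreeGroup.of (Sum.inl x : Yt X))
  | Sum.inr (Sum.inl a) => SemidirectProduct.inr (FreeGroup.of a)
  | Sum.inr (Sum.inr _) => SemidirectProduct.inl (qY X)

variable {X R}

theorem conj_inl (g : FreeGroup (ThIdx X R)) (n : FreeGroup (Yt X)) :
    (SemidirectProduct.inr g : SD X R) * SemidirectProduct.inl n * (SemidirectProduct.inr g)⁻¹ =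
      SemidirectProduct.inl (act X R g n) := by
  rw [← _root_.map_inv]
  exact (SemidirectProduct.inl_aut g n).symm

theorem inr_mul_inl (g : FreeGroup (ThIdx X R)) (n : FreeGroup (Yt X)) :
    (SemidirectProduct.inr g : SD X R) * SemidirectProduct.inl n =
      SemidirectProduct.inl (act X R g n) * SemidirectProduct.inr g := by
  have h := conj_inl g n
  calc (SemidirectProduct.inr g : SD X R) * SemidirectProduct.inl n
      = (SemidirectProduct.inr g * SemidirectProduct.inl n * (SemidirectProduct.inr g)⁻¹) *
          SemidirectProduct.inr g := by group
    _ = _ := by rw [h]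

theorem liftFF_ofX (w : FreeGroup X) :
    FreeGroup.lift (FF X R) (ofX X R w) = SemidirectProduct.inl (embY X w) := by
  have : (FreeGroup.lift (FF X R)).comp (ofX X R) =
      (SemidirectProduct.inl : FreeGroup (Yt X) →* SD X R).comp (embY X) := by
    refine FreeGroup.ext_hom _ _ fun x => ?_
    simp only [MonoidHom.comp_apply, ofX, embY, FreeGroup.map.of, FreeGroup.lift_apply_of]
    rfl
  exact DFunLike.congr_fun this w

theorem rels_check : ∀ r ∈ rels X R, FreeGroup.lift (FF X R) r = 1 := by
  intro w hw
  rcases hw with ⟨a, x, rfl⟩ | ⟨x, rfl⟩ | ⟨r, rfl⟩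
  · -- θ_a x = x θ_a
    simp only [_root_.map_mul, _root_.map_inv, θg, xg, FreeGroup.lift_apply_of]
    show (SemidirectProduct.inr (FreeGroup.of a) : SD X R) *
        SemidirectProduct.inl (FreeGroup.of (Sum.inl x)) *
        (SemidirectProduct.inl (FreeGroup.of (Sum.inl x)) *
          SemidirectProduct.inr (FreeGroup.of a))⁻¹ = 1
    rw [mul_inv_eq_one, inr_mul_inl]
    have h2 : act X R (FreeGroup.of a) (FreeGroup.of (Sum.inl x) : FreeGroup (Yt X)) =
        FreeGroup.of (Sum.inl x) := by
      rw [act_of_apply]; exact phi_x a x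
    rw [h2]
  · -- θ_x x q = q x θ_x
    simp only [_root_.map_mul, _root_.map_inv, θg, xg, qg, FreeGroup.lift_apply_of]
    show (SemidirectProduct.inr (FreeGroup.of (Sum.inl x)) : SD X R) *
        SemidirectProduct.inl (FreeGroup.of (Sum.inl x)) * SemidirectProduct.inl (qY X) *
        (SemidirectProduct.inl (qY X) * SemidirectProduct.inl (FreeGroup.of (Sum.inl x)) *
          SemidirectProduct.inr (FreeGroup.of (Sum.inl x)))⁻¹ = 1
    rw [mul_inv_eq_one]
    have hact : act X R (FreeGroup.of (Sum.inl x))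
        ((FreeGroup.of (Sum.inl x) : FreeGroup (Yt X)) * qY X) =
          qY X * FreeGroup.of (Sum.inl x) := by
      rw [act_of_apply, _root_.map_mul, phi_x, phi_q_inl]
      group
    calc (SemidirectProduct.inr (FreeGroup.of (Sum.inl x)) : SD X R) *
          SemidirectProduct.inl (FreeGroup.of (Sum.inl x)) * SemidirectProduct.inl (qY X)
        = SemidirectProduct.inr (FreeGroup.of (Sum.inl x)) *
            SemidirectProduct.inl ((FreeGroup.of (Sum.inl x) : FreeGroup (Yt X)) * qY X) := by
          rw [mul_assoc, ← _root_.map_mul]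
      _ = SemidirectProduct.inl (qY X * FreeGroup.of (Sum.inl x)) *
            SemidirectProduct.inr (FreeGroup.of (Sum.inl x)) := by rw [inr_mul_inl, hact]
      _ = _ := by rw [_root_.map_mul]
  · -- θ_r q = q r θ_r
    simp only [_root_.map_mul, _root_.map_inv, θg, qg, FreeGroup.lift_apply_of, liftFF_ofX]
    show (SemidirectProduct.inr (FreeGroup.of (Sum.inr r)) : SD X R) *
        SemidirectProduct.inl (qY X) *
        (SemidirectProduct.inl (qY X) * SemidirectProduct.inl (embY X r.1) *
          SemidirectProduct.inr (FreeGroup.of (Sum.inr r)))⁻¹ = 1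
    rw [mul_inv_eq_one]
    have hact : act X R (FreeGroup.of (Sum.inr r)) (qY X) = qY X * embY X r.1 := by
      rw [act_of_apply, phi_q_inr]
    rw [inr_mul_inl, hact, _root_.map_mul]

variable (X R) in
/-- The structural homomorphism `M(G) →* F(X ∪ {q}) ⋊ F(Θ)`. -/
def Psi : M X R →* SD X R := PresentedGroup.toGroup rels_check

theorem Psi_toM (w : FreeGroup (Gen X R)) : Psi X R (toM X R w) = FreeGroup.lift (FF X R) w := by
  have : (Psi X R).comp (toM X R) = FreeGroup.lift (FF X R) := by
    refine FreeGroup.ext_hom _ _ fun g => ?_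
    show Psi X R (toM X R (FreeGroup.of g)) = FreeGroup.lift (FF X R) (FreeGroup.of g)
    have h1 : toM X R (FreeGroup.of g) = PresentedGroup.of g := rfl
    rw [h1, FreeGroup.lift_apply_of]
    exact PresentedGroup.toGroup.of rels_check
  exact DFunLike.congr_fun this w

theorem Psi_toMY (w : FreeGroup (Yt X)) : Psi X R (toMY X R w) = SemidirectProduct.inl w := by
  have : (Psi X R).comp (toMY X R) =
      (SemidirectProduct.inl : FreeGroup (Yt X) →* SD X R) := by
    refine FreeGroup.ext_hom _ _ fun y => ?_
    show Psi X R (toMY X R (FreeGroup.of y)) = SemidirectProduct.inl (FreeGroup.of y)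
    have h1 : toMY X R (FreeGroup.of y) =
        toM X R (FreeGroup.of (Sum.elim Sum.inl (fun u => Sum.inr (Sum.inr u)) y)) := by
      rw [toMY, MonoidHom.comp_apply, FreeGroup.map.of]
    rw [h1, Psi_toM, FreeGroup.lift_apply_of]
    rcases y with x | u
    · rfl
    · rfl
  exact DFunLike.congr_fun this w

theorem Psi_Hgrp {γ : M X R} (hγ : γ ∈ Hgrp X R) :
    ∃ (g : FreeGroup X) (θ : FreeGroup (ThIdx X R)),
      Psi X R γ = SemidirectProduct.inl (embY X g) * SemidirectProduct.inr θ := by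
  refine Subgroup.closure_induction ?_ ?_ ?_ ?_ hγ
  · rintro x (⟨x', rfl⟩ | ⟨a, rfl⟩)
    · refine ⟨FreeGroup.of x', 1, ?_⟩
      rw [xM, Psi_toM]
      show FreeGroup.lift (FF X R) (FreeGroup.of (Sum.inl x')) = _
      rw [FreeGroup.lift_apply_of]
      simp [FF, embY, FreeGroup.map.of]
    · refine ⟨1, FreeGroup.of a, ?_⟩
      rw [θM, Psi_toM]
      show FreeGroup.lift (FF X R) (FreeGroup.of (Sum.inr (Sum.inl a))) = _
      rw [FreeGroup.lift_apply_of]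
      simp [FF]
  · exact ⟨1, 1, by simp⟩
  · rintro x y _ _ ⟨g1, θ1, h1⟩ ⟨g2, θ2, h2⟩
    refine ⟨g1 * g2, θ1 * θ2, ?_⟩
    rw [_root_.map_mul, h1, h2]
    have key : (SemidirectProduct.inr θ1 : SD X R) * SemidirectProduct.inl (embY X g2) =
        SemidirectProduct.inl (embY X g2) * SemidirectProduct.inr θ1 := by
      rw [inr_mul_inl, act_embY]
    have hstep : (SemidirectProduct.inl (embY X g1) : SD X R) * SemidirectProduct.inr θ1 *
        (SemidirectProduct.inl (embY X g2) * SemidirectProduct.inr θ2) =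
        SemidirectProduct.inl (embY X g1) *
          ((SemidirectProduct.inr θ1 : SD X R) * SemidirectProduct.inl (embY X g2)) *
          SemidirectProduct.inr θ2 := by group
    rw [hstep, key, _root_.map_mul (embY X),
      _root_.map_mul (SemidirectProduct.inl : FreeGroup (Yt X) →* SD X R),
      _root_.map_mul (SemidirectProduct.inr : FreeGroup (ThIdx X R) →* SD X R)]
    group
  · rintro x _ ⟨g, θ, h⟩
    refine ⟨g⁻¹, θ⁻¹, ?_⟩
    rw [_root_.map_inv, h, mul_inv_rev]
    have h1 : ((SemidirectProduct.inr θ : SD X R))⁻¹ = SemidirectProduct.inr θ⁻¹ :=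
      (_root_.map_inv _ _).symm
    have h2 : ((SemidirectProduct.inl (embY X g) : SD X R))⁻¹ =
        SemidirectProduct.inl (embY X g⁻¹) := by
      rw [← _root_.map_inv, ← _root_.map_inv]
    have key : (SemidirectProduct.inr θ⁻¹ : SD X R) * SemidirectProduct.inl (embY X g⁻¹) =
        SemidirectProduct.inl (embY X g⁻¹) * SemidirectProduct.inr θ⁻¹ := by
      rw [inr_mul_inl, act_embY]
    rw [h1, h2, key]

end Psi

end Miller
open Miller in
/-- Suppose `x = u₀q^{σ₁}u₁q^{σ₂}⋯q^{σ_k}u_k` and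
`y = v₀q^{ε₁}v₁q^{ε₂}⋯q^{ε_ℓ}v_ℓ` (here `0`-indexed: `σ_{i+1} = σ i`, `u_{i+1} = u i`),
where the `u_i` and `v_i` are words on `X`, `σ_i, ε_i ∈ {±1}`, and both words are freely
and cyclically reduced. If `x ≈ y` in the Miller machine `M(G)` (conjugate via an element
of `⟨X ∪ Θ⟩`), then `k = ℓ` and `σ_i = ε_i` for all `i`. -/
theorem statement11 (X : Type) [Fintype X] (R : Finset (FreeGroup X)) (hR : R.Nonempty)
    (k l : ℕ) (σ τ : ℕ → ℤ) (hσ : IsSgn k σ) (hτ : IsSgn l τ)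
    (u₀ v₀ : FreeGroup X) (u v : ℕ → FreeGroup X)
    (hxred : wlen (embY X u₀ * qword X k σ u) =
      wlen u₀ + (k + ∑ i ∈ Finset.range k, wlen (u i)))
    (hyred : wlen (embY X v₀ * qword X l τ v) =
      wlen v₀ + (l + ∑ i ∈ Finset.range l, wlen (v i)))
    (hxcyc : CyclRed (embY X u₀ * qword X k σ u))
    (hycyc : CyclRed (embY X v₀ * qword X l τ v))
    (hconj : ∃ γ ∈ Hgrp X R,
      γ * toMY X R (embY X u₀ * qword X k σ u) * γ⁻¹ =
        toMY X R (embY X v₀ * qword X l τ v)) :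
    k = l ∧ ∀ i < k, σ i = τ i := by

  classical
  obtain ⟨γ, hγH, hEq⟩ := hconj
  obtain ⟨g, θ, hγ⟩ := Psi_Hgrp hγH
  have hPsiEq := congrArg (Psi X R) hEq
  rw [_root_.map_mul, _root_.map_mul, _root_.map_inv, Psi_toMY, Psi_toMY, hγ] at hPsiEq
  have hconjS : (SemidirectProduct.inl (embY X g) * SemidirectProduct.inr θ : SD X R) *
      SemidirectProduct.inl (embY X u₀ * qword X k σ u) *
      (SemidirectProduct.inl (embY X g) * SemidirectProduct.inr θ)⁻¹ =
      SemidirectProduct.inl (embY X g * act X R θ (embY X u₀ * qword X k σ u) *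
        (embY X g)⁻¹) := by
    have h1 := conj_inl θ (embY X u₀ * qword X k σ u)
    calc (SemidirectProduct.inl (embY X g) * SemidirectProduct.inr θ : SD X R) *
          SemidirectProduct.inl (embY X u₀ * qword X k σ u) *
          (SemidirectProduct.inl (embY X g) * SemidirectProduct.inr θ)⁻¹
        = SemidirectProduct.inl (embY X g) *
            (SemidirectProduct.inr θ * SemidirectProduct.inl (embY X u₀ * qword X k σ u) *
              (SemidirectProduct.inr θ)⁻¹) * (SemidirectProduct.inl (embY X g))⁻¹ := by group
      _ = SemidirectProduct.inl (embY X g) *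
            SemidirectProduct.inl (act X R θ (embY X u₀ * qword X k σ u)) *
            (SemidirectProduct.inl (embY X g))⁻¹ := by rw [h1]
      _ = _ := by rw [← _root_.map_inv, ← _root_.map_mul, ← _root_.map_mul]
  rw [hconjS] at hPsiEq
  have hE : embY X g * act X R θ (embY X u₀ * qword X k σ u) * (embY X g)⁻¹ =
      embY X v₀ * qword X l τ v := SemidirectProduct.inl_injective hPsiEq
  -- q-skeleton computation
  obtain ⟨p, s, hq⟩ := act_q θ
  have hflipu : ∀ i, i + 1 < k → σ i ≠ σ (i + 1) → u i ≠ 1 :=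
    flips_of_reduced k σ u u₀ hσ hxred
  have hflipv : ∀ i, i + 1 < l → τ i ≠ τ (i + 1) → v i ≠ 1 :=
    flips_of_reduced l τ v v₀ hτ hyred
  -- the x-side skeleton
  have hcondx : ∀ i, i + 1 < k →
      (fun i => decide (σ i = 1)) i ≠ (fun i => decide (σ i = 1)) (i + 1) →
      (fun i => cond (decide (σ i = 1)) (s * u i) (p⁻¹ * u i)) i *
        (fun i => cond (decide (σ i = 1)) p s⁻¹) (i + 1) ≠ 1 := by
    intro i hi hne
    have hσne : σ i ≠ σ (i + 1) := by
      intro h; apply hne; simp only [h]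
    have hui := hflipu i hi hσne
    rcases hσ i (by omega) with h1 | h1 <;> rcases hσ (i + 1) (by omega) with h2 | h2
    · exfalso; apply hne; simp [h1, h2]
    · have e1 : decide (σ i = 1) = true := by simp [h1]
      have e2 : decide (σ (i + 1) = 1) = false := by simp [h2]
      simp only [e1, e2, cond_true, cond_false]
      intro hcon
      apply hui
      have : u i = s⁻¹ * (s * u i * s⁻¹) * s := by group
      rw [hcon] at this
      simpa using this
    · have e1 : decide (σ i = 1) = false := by simp [h1]
      have e2 : decide (σ (i + 1) = 1) = true := by simp [h2]
      simp only [e1, e2, cond_true, cond_false]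
      intro hcon
      apply hui
      have : u i = p * (p⁻¹ * u i * p) * p⁻¹ := by group
      rw [hcon] at this
      simpa using this
    · exfalso; apply hne; simp [h1, h2]
  have hqskx : qsk (act X R θ (embY X u₀ * qword X k σ u)) =
      (List.range k).map (fun i => decide (σ i = 1)) := by
    rw [_root_.map_mul, act_embY, qsk_mul_left, act_qword θ p s hq k σ u hσ]
    exact (blocks_main k _ _ _ hcondx).1
  -- the y-side skeleton
  have hcondy : ∀ i, i + 1 < l →
      (fun i => decide (τ i = 1)) i ≠ (fun i => decide (τ i = 1)) (i + 1) →
      v i * (fun _ : ℕ => (1 : FreeGroup X)) (i + 1) ≠ 1 := by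
    intro i hi hne
    have hτne : τ i ≠ τ (i + 1) := by
      intro h; apply hne; simp only [h]
    have hvi := hflipv i hi hτne
    simpa using hvi
  have hqsky : qsk (embY X v₀ * qword X l τ v) =
      (List.range l).map (fun i => decide (τ i = 1)) := by
    rw [qsk_mul_left, qword_eq_blocks l τ v hτ]
    exact (blocks_main l _ _ _ hcondy).1
  -- combine
  have hpat : (List.range k).map (fun i => decide (σ i = 1)) =
      (List.range l).map (fun i => decide (τ i = 1)) := by
    rw [← hqskx, ← hqsky, ← hE, ← _root_.map_inv (embY X)]
    rw [qsk_mul_right, qsk_mul_left]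
  have hkl : k = l := by
    have := congrArg List.length hpat
    simpa using this
  refine ⟨hkl, fun i hik => ?_⟩
  have hget := congrArg (fun L => L[i]?) hpat
  simp only [List.getElem?_map] at hget
  rw [List.getElem?_range hik, List.getElem?_range (by omega : i < l)] at hget
  simp only [Option.map_some] at hget
  have hde : decide (σ i = 1) = decide (τ i = 1) := by
    simpa using hget
  rcases hσ i hik with h1 | h1 <;> rcases hτ i (by omega) with h2 | h2 <;>
    simp_all
end
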